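/- Let C be a fourth-order tensor on ℝ² with entries C^{ijkl} = (4λμ/(λ+2μ)) a^{ij} a^{kl} + 2μ (a^{ik}a^{jl} + a^{il}a^{jk}), where (a^{ij}) is a symmetric positive definite 2×2 matrix and λ, μ satisfy 3λ + 2μ > 0 and μ > 0. Then C is coercive on symmetric 2×2 matrices: there exists c > 0 such that Σᵢⱼₖₗ C^{ijkl} tₖₗ tᵢⱼ ≥ c Σᵢⱼ (tᵢⱼ)² for all symmetric matrices t = (tᵢⱼ). -/

import Mathlib

open Matrix Finset

noncomputable section

set_option maxHeartbeats 1000000 in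
lemma key_coercive (lam mu p q r x y z : ℝ) (hmu : 0 < mu) (hlam : 0 < 3 * lam + 2 * mu)
    (hp : 0 < p) (hr : 0 < r) (hd : 0 < p * r - q * q) :
    (4 * lam * mu / (lam + 2 * mu)) * (p * x + 2 * q * y + r * z) ^ 2
      + 4 * mu * ((p * x + q * y) ^ 2 + (q * y + r * z) ^ 2
          + 2 * (p * y + q * z) * (q * x + r * y))
    ≥ ((4 * mu * (3 * lam + 2 * mu) / (3 * (lam + 2 * mu)))
        * ((p * r - q * q) / (p + r)) ^ 2) * (x ^ 2 + 2 * y ^ 2 + z ^ 2) := by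
  have hL : 0 < lam + 2 * mu := by linarith
  have hpr : 0 < p + r := by linarith
  set s := p * x + 2 * q * y + r * z with hs
  set T := (p * x + q * y) ^ 2 + (q * y + r * z) ^ 2
      + 2 * (p * y + q * z) * (q * x + r * y) with hT
  set W := p * (x ^ 2 + y ^ 2) + 2 * q * (x * y + y * z) + r * (y ^ 2 + z ^ 2) with hW
  set g := x ^ 2 + 2 * y ^ 2 + z ^ 2 with hg
  have hg0 : 0 ≤ g := by positivity
  have h1 : s ^ 2 ≤ 2 * T := by
    have hid : p * r * (2 * T - s ^ 2)
        = (p * r - q * q) * ((p * x + q * y) - (q * y + r * z)) ^ 2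
          + (q * s + 2 * (p * r - q * q) * y) ^ 2 := by rw [hT, hs]; ring
    nlinarith [sq_nonneg ((p * x + q * y) - (q * y + r * z)),
      sq_nonneg (q * s + 2 * (p * r - q * q) * y), mul_pos hp hr]
  have h2b : (p * r - q * q) * g ≤ (p + r) * W := by
    have hid : (p + r) * W - (p * r - q * q) * g
        = (p * x + q * y) ^ 2 + (p * y + q * z) ^ 2 + (q * x + r * y) ^ 2
          + (q * y + r * z) ^ 2 := by rw [hW, hg]; ring
    nlinarith [sq_nonneg (p * x + q * y), sq_nonneg (p * y + q * z),
      sq_nonneg (q * x + r * y), sq_nonneg (q * y + r * z)]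
  have hW0 : 0 ≤ W := by nlinarith [mul_nonneg hd.le hg0]
  have h2a : (p * r - q * q) * W ≤ (p + r) * T := by
    have hid : (p + r) * ((p + r) * T - (p * r - q * q) * W)
        = ((p * (p * x + q * y) + q * (p * y + q * z)) ^ 2
            + (q * (p * x + q * y) + r * (p * y + q * z)) ^ 2
            + (p * r - q * q) * ((p * x + q * y) ^ 2 + (p * y + q * z) ^ 2))
          + ((p * (q * x + r * y) + q * (q * y + r * z)) ^ 2
            + (q * (q * x + r * y) + r * (q * y + r * z)) ^ 2
            + (p * r - q * q) * ((q * x + r * y) ^ 2 + (q * y + r * z) ^ 2)) := by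
      rw [hT, hW]; ring
    nlinarith [sq_nonneg (p * (p * x + q * y) + q * (p * y + q * z)),
      sq_nonneg (q * (p * x + q * y) + r * (p * y + q * z)),
      sq_nonneg (p * (q * x + r * y) + q * (q * y + r * z)),
      sq_nonneg (q * (q * x + r * y) + r * (q * y + r * z)),
      mul_nonneg hd.le (add_nonneg (sq_nonneg (p * x + q * y)) (sq_nonneg (p * y + q * z))),
      mul_nonneg hd.le (add_nonneg (sq_nonneg (q * x + r * y)) (sq_nonneg (q * y + r * z)))]
  have hT0 : 0 ≤ T := by nlinarith [mul_nonneg hd.le hW0]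
  have hTg : ((p * r - q * q) / (p + r)) ^ 2 * g ≤ T := by
    rw [div_pow, div_mul_eq_mul_div, div_le_iff₀ (by positivity)]
    nlinarith [mul_le_mul_of_nonneg_left h2b hd.le,
      mul_le_mul_of_nonneg_left h2a hpr.le]
  have hc1 : 0 < 4 * mu * (3 * lam + 2 * mu) / (3 * (lam + 2 * mu)) := by positivity
  have hQ : (4 * mu * (3 * lam + 2 * mu) / (3 * (lam + 2 * mu))) * T
      ≤ (4 * lam * mu / (lam + 2 * mu)) * s ^ 2 + 4 * mu * T := by
    have hid : (4 * lam * mu / (lam + 2 * mu)) * s ^ 2 + 4 * mu * T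
        - (4 * mu * (3 * lam + 2 * mu) / (3 * (lam + 2 * mu))) * T
        = (4 * mu * s ^ 2 * (3 * lam + 2 * mu) + 8 * mu ^ 2 * (2 * T - s ^ 2))
          / (3 * (lam + 2 * mu)) := by
      field_simp
      linear_combination (-12 * T) * mul_inv_cancel₀ hL.ne'
    have h0 : 0 ≤ (4 * mu * s ^ 2 * (3 * lam + 2 * mu) + 8 * mu ^ 2 * (2 * T - s ^ 2))
        / (3 * (lam + 2 * mu)) := by
      apply div_nonneg _ (by linarith)
      nlinarith [mul_nonneg (mul_nonneg (by linarith : (0:ℝ) ≤ 4 * mu) (sq_nonneg s)) hlam.le,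
        mul_nonneg (mul_nonneg (by norm_num : (0:ℝ) ≤ 8) (sq_nonneg mu))
          (by linarith : 0 ≤ 2 * T - s ^ 2)]
    linarith [hid ▸ h0]
  calc ((4 * mu * (3 * lam + 2 * mu) / (3 * (lam + 2 * mu)))
        * ((p * r - q * q) / (p + r)) ^ 2) * g
      = (4 * mu * (3 * lam + 2 * mu) / (3 * (lam + 2 * mu)))
        * (((p * r - q * q) / (p + r)) ^ 2 * g) := by ring
    _ ≤ (4 * mu * (3 * lam + 2 * mu) / (3 * (lam + 2 * mu))) * T :=
        mul_le_mul_of_nonneg_left hTg hc1.le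
    _ ≤ (4 * lam * mu / (lam + 2 * mu)) * s ^ 2 + 4 * mu * T := hQ

set_option maxHeartbeats 1000000 in
theorem stmt_16 (lam mu : ℝ) (hmu : 0 < mu) (hlam : 0 < 3 * lam + 2 * mu)
    (a : Matrix (Fin 2) (Fin 2) ℝ) (ha : a.IsSymm) (hpos : a.PosDef)
    (C : Fin 2 → Fin 2 → Fin 2 → Fin 2 → ℝ)
    (hC : ∀ i j k l, C i j k l =
      (4 * lam * mu / (lam + 2 * mu)) * a i j * a k l
        + 2 * mu * (a i k * a j l + a i l * a j k)) :
    ∃ c > (0 : ℝ), ∀ t : Matrix (Fin 2) (Fin 2) ℝ, t.IsSymm →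
      (∑ i : Fin 2, ∑ j : Fin 2, ∑ k : Fin 2, ∑ l : Fin 2,
        C i j k l * t k l * t i j) ≥
      c * ∑ i : Fin 2, ∑ j : Fin 2, (t i j) ^ 2 := by
  have hq : a 1 0 = a 0 1 := ha.apply 0 1
  have hp : 0 < a 0 0 := by
    have h := hpos.dotProduct_mulVec_pos (x := ![1, 0]) (by
      intro h
      have := congrFun h 0
      simp at this)
    simpa [Matrix.mulVec, dotProduct, Fin.sum_univ_two] using h
  have hr : 0 < a 1 1 := by
    have h := hpos.dotProduct_mulVec_pos (x := ![0, 1]) (by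
      intro h
      have := congrFun h 1
      simp at this)
    simpa [Matrix.mulVec, dotProduct, Fin.sum_univ_two] using h
  have hd : 0 < a 0 0 * a 1 1 - a 0 1 * a 0 1 := by
    have h := hpos.det_pos
    rw [Matrix.det_fin_two, hq] at h
    linarith
  refine ⟨(4 * mu * (3 * lam + 2 * mu) / (3 * (lam + 2 * mu)))
      * ((a 0 0 * a 1 1 - a 0 1 * a 0 1) / (a 0 0 + a 1 1)) ^ 2, ?_, ?_⟩
  · have hL : 0 < lam + 2 * mu := by linarith
    have hpr : 0 < a 0 0 + a 1 1 := by linarith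
    positivity
  · intro t ht
    have hty : t 1 0 = t 0 1 := ht.apply 0 1
    have key := key_coercive lam mu (a 0 0) (a 0 1) (a 1 1) (t 0 0) (t 0 1) (t 1 1)
      hmu hlam hp hr hd
    simp only [hC, Fin.sum_univ_two, hq, hty]
    rw [ge_iff_le]
    calc (4 * mu * (3 * lam + 2 * mu) / (3 * (lam + 2 * mu)))
          * ((a 0 0 * a 1 1 - a 0 1 * a 0 1) / (a 0 0 + a 1 1)) ^ 2
          * (t 0 0 ^ 2 + t 0 1 ^ 2 + (t 0 1 ^ 2 + t 1 1 ^ 2))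
        = ((4 * mu * (3 * lam + 2 * mu) / (3 * (lam + 2 * mu)))
          * ((a 0 0 * a 1 1 - a 0 1 * a 0 1) / (a 0 0 + a 1 1)) ^ 2)
          * (t 0 0 ^ 2 + 2 * t 0 1 ^ 2 + t 1 1 ^ 2) := by ring
      _ ≤ (4 * lam * mu / (lam + 2 * mu))
            * (a 0 0 * t 0 0 + 2 * a 0 1 * t 0 1 + a 1 1 * t 1 1) ^ 2
          + 4 * mu * ((a 0 0 * t 0 0 + a 0 1 * t 0 1) ^ 2
            + (a 0 1 * t 0 1 + a 1 1 * t 1 1) ^ 2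
            + 2 * (a 0 0 * t 0 1 + a 0 1 * t 1 1) * (a 0 1 * t 0 0 + a 1 1 * t 0 1)) := key
      _ = _ := by ring
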